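/- arXiv:1904.04112 — 2 statements merged into one kernel-verified Lean document; each statement's English description precedes it below -/
import Mathlib

section
/- Let (S, Σ, μ) be a measure space, let {f_n} be a sequence of measurable functions uniformly bounded in L^∞(S, μ), and let {g_n} converge in L^1(S, μ) to a nonnegative limit g. Then limsup_{n→∞} ∫_S f_n g_n dμ ≤ ∫_S (limsup_{n→∞} f_n) g dμ. -/
open MeasureTheory Filter Topology

/-- Reverse Fatou's lemma for real-valued functions with a uniform integrable bound. -/
lemma aux_reverse_fatou {S : Type*} [MeasurableSpace S] (μ : Measure S)
    (F : ℕ → S → ℝ) (G : S → ℝ) (hFmeas : ∀ n, Measurable (F n))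
    (hG : Integrable G μ)
    (hbd : ∀ᵐ x ∂μ, ∀ n, |F n x| ≤ G x) :
    limsup (fun n => ∫ x, F n x ∂μ) atTop ≤ ∫ x, limsup (fun n => F n x) atTop ∂μ := by
  have hFint : ∀ n, Integrable (F n) μ := fun n =>
    hG.mono' (hFmeas n).aestronglyMeasurable (hbd.mono fun x h => by
      simpa [Real.norm_eq_abs] using h n)
  set L : S → ℝ := fun x => limsup (fun n => F n x) atTop with hL
  have hLmeas : Measurable L := Measurable.limsup hFmeas
  have hLbd : ∀ᵐ x ∂μ, |L x| ≤ G x := by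
    filter_upwards [hbd] with x hx
    rw [abs_le]
    constructor
    · exact le_limsup_of_frequently_le (Frequently.of_forall fun n => (abs_le.1 (hx n)).1)
        (isBoundedUnder_of ⟨G x, fun n => (abs_le.1 (hx n)).2⟩)
    · exact limsup_le_of_le (isCoboundedUnder_le_of_le atTop fun n => (abs_le.1 (hx n)).1)
        (Eventually.of_forall fun n => (abs_le.1 (hx n)).2)
  have hLint : Integrable L μ :=
    hG.mono' hLmeas.aestronglyMeasurable (hLbd.mono fun x h => by simpa [Real.norm_eq_abs] using h)
  -- key inequality in ℝ≥0∞
  have hsub_nn : ∀ n, 0 ≤ᵐ[μ] fun x => G x - F n x := fun n =>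
    hbd.mono fun x h => sub_nonneg.2 (abs_le.1 (h n)).2
  have hLsub_nn : 0 ≤ᵐ[μ] fun x => G x - L x :=
    hLbd.mono fun x h => sub_nonneg.2 (abs_le.1 h).2
  have h1 : ∀ n, ENNReal.ofReal (∫ x, (G x - F n x) ∂μ)
      = ∫⁻ x, ENNReal.ofReal (G x - F n x) ∂μ := fun n =>
    ofReal_integral_eq_lintegral_ofReal (hG.sub (hFint n)) (hsub_nn n)
  have h2 : ENNReal.ofReal (∫ x, (G x - L x) ∂μ) = ∫⁻ x, ENNReal.ofReal (G x - L x) ∂μ :=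
    ofReal_integral_eq_lintegral_ofReal (hG.sub hLint) hLsub_nn
  have h3 : (∫⁻ x, ENNReal.ofReal (G x - L x) ∂μ)
      ≤ ∫⁻ x, liminf (fun n => ENNReal.ofReal (G x - F n x)) atTop ∂μ := by
    refine lintegral_mono_ae ?_
    filter_upwards [hbd] with x hx
    have hbdd_above : IsBoundedUnder (· ≤ ·) atTop (fun n => F n x) :=
      isBoundedUnder_of ⟨G x, fun n => (abs_le.1 (hx n)).2⟩
    have hcobdd : IsCoboundedUnder (· ≤ ·) atTop (fun n => F n x) :=
      isCoboundedUnder_le_of_le _ fun n => (abs_le.1 (hx n)).1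
    have e1 : G x - L x = liminf (fun n => G x - F n x) atTop :=
      (liminf_const_sub atTop (fun n => F n x) (G x) hbdd_above hcobdd).symm
    have e2 : ENNReal.ofReal (liminf (fun n => G x - F n x) atTop)
        = liminf (fun n => ENNReal.ofReal (G x - F n x)) atTop := by
      have := Monotone.map_liminf_of_continuousAt (F := atTop)
        (f := ENNReal.ofReal) (fun _ _ h => ENNReal.ofReal_le_ofReal h)
        (fun n => G x - F n x) ENNReal.continuous_ofReal.continuousAt
        (isCoboundedUnder_ge_of_le (x := 2 * G x) atTop fun n => by
          have := (abs_le.1 (hx n)).1; linarith)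
        (isBoundedUnder_of ⟨0, fun n => sub_nonneg.2 (abs_le.1 (hx n)).2⟩)
      simpa [Function.comp_def] using this
    rw [e1, e2]
  have h4 : (∫⁻ x, liminf (fun n => ENNReal.ofReal (G x - F n x)) atTop ∂μ)
      ≤ liminf (fun n => ∫⁻ x, ENNReal.ofReal (G x - F n x) ∂μ) atTop :=
    lintegral_liminf_le' fun n =>
      ((hG.aemeasurable.sub (hFmeas n).aemeasurable).ennreal_ofReal)
  -- back to ℝ
  set b : ℕ → ℝ := fun n => ∫ x, (G x - F n x) ∂μ with hb
  have hbnn : ∀ n, 0 ≤ b n := fun n => integral_nonneg_of_ae (hsub_nn n)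
  have hbub : ∀ n, b n ≤ 2 * ∫ x, G x ∂μ := by
    intro n
    have : b n ≤ ∫ x, 2 * G x ∂μ := by
      refine integral_mono_ae (hG.sub (hFint n)) (hG.const_mul 2) ?_
      filter_upwards [hbd] with x hx
      have := (abs_le.1 (hx n)).1; linarith
    simpa [integral_const_mul] using this
  have key : ENNReal.ofReal (∫ x, (G x - L x) ∂μ) ≤ ENNReal.ofReal (liminf b atTop) := by
    calc ENNReal.ofReal (∫ x, (G x - L x) ∂μ)
        ≤ liminf (fun n => ∫⁻ x, ENNReal.ofReal (G x - F n x) ∂μ) atTop := by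
          rw [h2]; exact le_trans h3 h4
      _ = liminf (fun n => ENNReal.ofReal (b n)) atTop := by
          exact liminf_congr (Eventually.of_forall fun n => (h1 n).symm)
      _ = ENNReal.ofReal (liminf b atTop) := by
          have := Monotone.map_liminf_of_continuousAt (F := atTop)
            (f := ENNReal.ofReal) (fun _ _ h => ENNReal.ofReal_le_ofReal h)
            b ENNReal.continuous_ofReal.continuousAt
            (isCoboundedUnder_ge_of_le _ hbub)
            (isBoundedUnder_of ⟨0, hbnn⟩)
          simpa [Function.comp_def] using this.symm
  have key' : (∫ x, (G x - L x) ∂μ) ≤ liminf b atTop := by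
    have hliminf_nn : 0 ≤ liminf b atTop :=
      le_liminf_of_le (isCoboundedUnder_ge_of_le _ hbub) (Eventually.of_forall hbnn)
    exact (ENNReal.ofReal_le_ofReal_iff hliminf_nn).1 key
  -- identify liminf b
  have hJbd : ∀ n, |∫ x, F n x ∂μ| ≤ ∫ x, G x ∂μ := by
    intro n
    calc |∫ x, F n x ∂μ| ≤ ∫ x, |F n x| ∂μ := by
          simpa [Real.norm_eq_abs] using norm_integral_le_integral_norm (F n)
      _ ≤ ∫ x, G x ∂μ := integral_mono_ae (hFint n).abs hG (hbd.mono fun x h => h n)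
  have hbval : ∀ n, b n = (∫ x, G x ∂μ) - ∫ x, F n x ∂μ := fun n =>
    integral_sub hG (hFint n)
  have hliminf_eq : liminf b atTop = (∫ x, G x ∂μ) - limsup (fun n => ∫ x, F n x ∂μ) atTop := by
    rw [show b = fun n => (∫ x, G x ∂μ) - ∫ x, F n x ∂μ from funext hbval]
    exact liminf_const_sub atTop (fun n => ∫ x, F n x ∂μ) (∫ x, G x ∂μ)
      (isBoundedUnder_of ⟨∫ x, G x ∂μ, fun n => (abs_le.1 (hJbd n)).2⟩)
      (isCoboundedUnder_le_of_le _ fun n => (abs_le.1 (hJbd n)).1)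
  rw [hliminf_eq, integral_sub hG hLint] at key'
  linarith

/-- Reverse Fatou's Lemma for products. -/
theorem reverse_fatou_products {S : Type*} [MeasurableSpace S] (μ : Measure S)
    (f : ℕ → S → ℝ) (gs : ℕ → S → ℝ) (g : S → ℝ) (C : ℝ)
    (hfmeas : ∀ n, Measurable (f n))
    (hfbd : ∀ n, ∀ᵐ x ∂μ, |f n x| ≤ C)
    (hgsint : ∀ n, Integrable (gs n) μ)
    (hgint : Integrable g μ)
    (hgpos : ∀ᵐ x ∂μ, 0 ≤ g x)
    (hconv : Tendsto (fun n => ∫ x, |gs n x - g x| ∂μ) atTop (𝓝 0)) :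
    limsup (fun n => ∫ x, f n x * gs n x ∂μ) atTop
      ≤ ∫ x, (limsup (fun n => f n x) atTop) * g x ∂μ := by
  -- replace C by a nonnegative bound
  set C' : ℝ := max C 0 with hC'
  have hC'nn : 0 ≤ C' := le_max_right C 0
  have hfbd' : ∀ᵐ x ∂μ, ∀ n, |f n x| ≤ C' :=
    ae_all_iff.2 fun n => (hfbd n).mono fun x h => h.trans (le_max_left C 0)
  -- a measurable representative of g
  set g₀ : S → ℝ := hgint.1.mk g with hg₀
  have hgae : g =ᵐ[μ] g₀ := hgint.1.ae_eq_mk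
  have hg₀meas : Measurable g₀ := hgint.1.stronglyMeasurable_mk.measurable
  have hg₀int : Integrable g₀ μ := hgint.congr hgae
  -- integrability of the products
  have hfg_int : ∀ n, Integrable (fun x => f n x * g x) μ := fun n =>
    hgint.bdd_mul (hfmeas n).aestronglyMeasurable
      ((hfbd n).mono fun x h => by
        rw [Real.norm_eq_abs]; exact h.trans (le_max_left C 0))
  have hfgs_int : ∀ n, Integrable (fun x => f n x * gs n x) μ := fun n =>
    (hgsint n).bdd_mul (hfmeas n).aestronglyMeasurable
      ((hfbd n).mono fun x h => by
        rw [Real.norm_eq_abs]; exact h.trans (le_max_left C 0))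
  -- bound on |∫ f n g|
  have hbbd : ∀ n, |∫ x, f n x * g x ∂μ| ≤ C' * ∫ x, |g x| ∂μ := by
    intro n
    calc |∫ x, f n x * g x ∂μ| ≤ ∫ x, |f n x * g x| ∂μ := by
          simpa only [Real.norm_eq_abs] using
            norm_integral_le_integral_norm (fun x => f n x * g x)
      _ ≤ ∫ x, C' * |g x| ∂μ := by
          refine integral_mono_ae (hfg_int n).abs (hgint.abs.const_mul C') ?_
          filter_upwards [hfbd'] with x hx
          rw [abs_mul]
          exact mul_le_mul_of_nonneg_right (hx n) (abs_nonneg _)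
      _ = C' * ∫ x, |g x| ∂μ := integral_const_mul C' _
  -- the error terms tend to zero
  have htend : Tendsto (fun n => C' * ∫ x, |gs n x - g x| ∂μ) atTop (𝓝 0) := by
    simpa using hconv.const_mul C'
  -- the difference of integrals is controlled by the L¹ distance
  have hdiff : ∀ n, |(∫ x, f n x * gs n x ∂μ) - ∫ x, f n x * g x ∂μ|
      ≤ C' * ∫ x, |gs n x - g x| ∂μ := by
    intro n
    have heq : (∫ x, f n x * gs n x ∂μ) - ∫ x, f n x * g x ∂μ
        = ∫ x, f n x * (gs n x - g x) ∂μ := by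
      rw [← integral_sub (hfgs_int n) (hfg_int n)]
      congr 1 with x
      ring
    rw [heq]
    calc |∫ x, f n x * (gs n x - g x) ∂μ| ≤ ∫ x, |f n x * (gs n x - g x)| ∂μ := by
          simpa only [Real.norm_eq_abs] using
            norm_integral_le_integral_norm (fun x => f n x * (gs n x - g x))
      _ ≤ ∫ x, C' * |gs n x - g x| ∂μ := by
          refine integral_mono_ae ?_ (((hgsint n).sub hgint).abs.const_mul C') ?_
          · exact ((hfgs_int n).sub (hfg_int n)).abs.congr
              (Eventually.of_forall fun x => by
                simp only [Pi.sub_apply, mul_sub])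
          · filter_upwards [hfbd'] with x hx
            rw [abs_mul]
            exact mul_le_mul_of_nonneg_right (hx n) (abs_nonneg _)
      _ = C' * ∫ x, |gs n x - g x| ∂μ := integral_const_mul C' _
  -- Step 2 : reverse Fatou applied to f n * g₀
  have hgeq : ∀ n, (∫ x, f n x * g x ∂μ) = ∫ x, f n x * g₀ x ∂μ := fun n =>
    integral_congr_ae (hgae.mono fun x h => by
      show f n x * g x = f n x * g₀ x
      rw [h])
  have step2 : limsup (fun n => ∫ x, f n x * g x ∂μ) atTop
      ≤ ∫ x, (limsup (fun n => f n x) atTop) * g x ∂μ := by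
    have haux := aux_reverse_fatou μ (fun n x => f n x * g₀ x) (fun x => C' * |g₀ x|)
      (fun n => (hfmeas n).mul hg₀meas) (hg₀int.abs.const_mul C')
      (by
        filter_upwards [hfbd'] with x hx n
        rw [abs_mul]
        exact mul_le_mul_of_nonneg_right (hx n) (abs_nonneg _))
    have hptwise : (fun x => limsup (fun n => f n x * g₀ x) atTop)
        =ᵐ[μ] fun x => (limsup (fun n => f n x) atTop) * g x := by
      filter_upwards [hfbd', hgpos, hgae] with x hx hgx hgeqx
      rw [← hgeqx]
      have hmono : Monotone (fun r : ℝ => r * g x) := fun a b hab =>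
        mul_le_mul_of_nonneg_right hab hgx
      have := Monotone.map_limsup_of_continuousAt (F := atTop) hmono (fun n => f n x)
        ((continuous_id.mul continuous_const).continuousAt)
        (isBoundedUnder_of ⟨C', fun n => (abs_le.1 (hx n)).2⟩)
        (isCoboundedUnder_le_of_le atTop fun n => (abs_le.1 (hx n)).1)
      simpa [Function.comp_def] using this.symm
    calc limsup (fun n => ∫ x, f n x * g x ∂μ) atTop
        = limsup (fun n => ∫ x, f n x * g₀ x ∂μ) atTop := by simp_rw [hgeq]
      _ ≤ ∫ x, limsup (fun n => f n x * g₀ x) atTop ∂μ := haux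
      _ = ∫ x, (limsup (fun n => f n x) atTop) * g x ∂μ := integral_congr_ae hptwise
  -- Step 1 : replace gs by g in the limsup
  have step1 : limsup (fun n => ∫ x, f n x * gs n x ∂μ) atTop
      ≤ limsup (fun n => ∫ x, f n x * g x ∂μ) atTop := by
    have hbdd_b : IsBoundedUnder (· ≤ ·) atTop (fun n => ∫ x, f n x * g x ∂μ) :=
      isBoundedUnder_of ⟨C' * ∫ x, |g x| ∂μ, fun n => (abs_le.1 (hbbd n)).2⟩
    have hcobdd_b : IsCoboundedUnder (· ≤ ·) atTop (fun n => ∫ x, f n x * g x ∂μ) :=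
      isCoboundedUnder_le_of_le atTop fun n => (abs_le.1 (hbbd n)).1
    have key : ∀ ε : ℝ, 0 < ε → limsup (fun n => ∫ x, f n x * gs n x ∂μ) atTop
        ≤ limsup (fun n => ∫ x, f n x * g x ∂μ) atTop + ε := by
      intro ε hε
      have hev : ∀ᶠ n in atTop, (∫ x, f n x * gs n x ∂μ) ≤ (∫ x, f n x * g x ∂μ) + ε := by
        filter_upwards [htend.eventually (gt_mem_nhds hε)] with n hn
        have := abs_le.1 (hdiff n)
        linarith [this.2]
      have hcobdd_a : IsCoboundedUnder (· ≤ ·) atTop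
          (fun n => ∫ x, f n x * gs n x ∂μ) := by
        refine IsBoundedUnder.isCoboundedUnder_le ?_
        refine ⟨-(C' * ∫ x, |g x| ∂μ) - 1, ?_⟩
        rw [eventually_map]
        filter_upwards [htend.eventually (gt_mem_nhds one_pos)] with n hn
        have h1 := abs_le.1 (hdiff n)
        have h2 := abs_le.1 (hbbd n)
        linarith [h1.1, h2.1]
      calc limsup (fun n => ∫ x, f n x * gs n x ∂μ) atTop
          ≤ limsup (fun n => (∫ x, f n x * g x ∂μ) + ε) atTop :=
            limsup_le_limsup hev hcobdd_a
              (isBoundedUnder_of ⟨(C' * ∫ x, |g x| ∂μ) + ε, fun n => by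
                have := (abs_le.1 (hbbd n)).2; linarith⟩)
        _ = limsup (fun n => ∫ x, f n x * g x ∂μ) atTop + ε :=
            limsup_add_const atTop _ ε hbdd_b hcobdd_b
    by_contra hcon
    push_neg at hcon
    have := key ((limsup (fun n => ∫ x, f n x * gs n x ∂μ) atTop
      - limsup (fun n => ∫ x, f n x * g x ∂μ) atTop) / 2) (by linarith)
    linarith
  exact step1.trans step2
end

section
/- Let g : (0,∞) → ℝ be C¹ with g(1) = 0 and g'(s) > 0 for all s > 0, and let ψ : [0,∞) → ℝ be C¹ on [0,∞), C² on (0,∞), with ψ(1) = 0, ψ(s) > 0 for s ≠ 1, ψ''(s) > 0 for s > 0 with s ≠ 1, and ψ'(s) → ∞ as s → ∞. Then for every ε > 0 there exists C_ε > 0 such that ψ(s) ≤ C_ε · s · g(s) · ψ'(s) for all s ≥ ε. -/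
set_option maxHeartbeats 1000000


open Filter Topology Set

/-- Lemma 4.3: the entropy integrand is controlled by the Hellinger
entropy-production integrand away from zero. -/
theorem entropy_le_hellinger_production (g ψ : ℝ → ℝ)
    (hg : ContDiffOn ℝ 1 g (Ioi 0))
    (hg1 : g 1 = 0)
    (hg' : ∀ s > (0:ℝ), 0 < deriv g s)
    (hψC1 : ContDiffOn ℝ 1 ψ (Ici 0))
    (hψC2 : ContDiffOn ℝ 2 ψ (Ioi 0))
    (hψ1 : ψ 1 = 0)
    (hψpos : ∀ s ≥ (0:ℝ), s ≠ 1 → 0 < ψ s)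
    (hψ'' : ∀ s > (0:ℝ), s ≠ 1 → 0 < deriv (deriv ψ) s)
    (hψ'top : Tendsto (deriv ψ) atTop atTop) :
    ∀ ε > (0:ℝ), ∃ Cε > (0:ℝ), ∀ s ≥ ε, ψ s ≤ Cε * (s * g s * deriv ψ s) := by
  intro ε hε
  have hIo : IsOpen (Ioi (0:ℝ)) := isOpen_Ioi
  have hgc : ContinuousOn g (Ioi 0) := hg.continuousOn
  have hgd : DifferentiableOn ℝ g (Ioi 0) := hg.differentiableOn one_ne_zero
  have hg'c : ContinuousOn (deriv g) (Ioi 0) :=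
    hg.continuousOn_deriv_of_isOpen hIo le_rfl
  have hψc : ContinuousOn ψ (Ioi 0) := hψC2.continuousOn
  have hψd : DifferentiableOn ℝ ψ (Ioi 0) := hψC2.differentiableOn (by norm_num)
  have hψ'c : ContinuousOn (deriv ψ) (Ioi 0) :=
    hψC2.continuousOn_deriv_of_isOpen hIo (by norm_num)
  -- g is strictly monotone on (0, ∞)
  have hgm : StrictMonoOn g (Ioi 0) := by
    apply strictMonoOn_of_deriv_pos (convex_Ioi 0) hgc
    intro x hx
    rw [interior_Ioi] at hx
    exact hg' x hx
  -- deriv ψ vanishes at 1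
  have hψ'1 : deriv ψ 1 = 0 := by
    have hmin : IsLocalMin ψ 1 := by
      filter_upwards [Ioi_mem_nhds (show (0:ℝ) < 1 by norm_num)] with t ht
      rcases eq_or_ne t 1 with h | h
      · rw [h]
      · rw [hψ1]; exact (hψpos t (le_of_lt ht) h).le
    exact hmin.deriv_eq_zero
  -- deriv ψ is strictly monotone on intervals avoiding 1
  have hmono : ∀ u v : ℝ, 0 < u → (1:ℝ) ∉ Ioo u v → StrictMonoOn (deriv ψ) (Icc u v) := by
    intro u v hu h1
    have hsub : Icc u v ⊆ Ioi 0 := fun x hx => lt_of_lt_of_le hu hx.1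
    apply strictMonoOn_of_deriv_pos (convex_Icc u v) (hψ'c.mono hsub)
    intro x hx
    rw [interior_Icc] at hx
    exact hψ'' x (lt_of_lt_of_le hu hx.1.le) (fun he => h1 (he ▸ hx))
  -- sign of deriv ψ
  have hψ'pos : ∀ s, 1 < s → 0 < deriv ψ s := by
    intro s hs
    have := hmono 1 s one_pos (fun h => lt_irrefl 1 h.1)
      (left_mem_Icc.2 hs.le) (right_mem_Icc.2 hs.le) hs
    rwa [hψ'1] at this
  have hψ'neg : ∀ s, 0 < s → s < 1 → deriv ψ s < 0 := by
    intro s hs0 hs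
    have := hmono s 1 hs0 (fun h => lt_irrefl 1 h.2)
      (left_mem_Icc.2 hs.le) (right_mem_Icc.2 hs.le) hs
    rwa [hψ'1] at this
  -- Step 1 : ψ s ≤ (s - 1) * deriv ψ s for s > 0
  have claim1 : ∀ s : ℝ, 0 < s → ψ s ≤ (s - 1) * deriv ψ s := by
    intro s hs
    rcases lt_trichotomy s 1 with hlt | heq | hgt
    · have hsubI : Icc s 1 ⊆ Ioi 0 := fun x hx => lt_of_lt_of_le hs hx.1
      obtain ⟨c, hc, hcd⟩ := exists_deriv_eq_slope ψ hlt (hψc.mono hsubI)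
        (hψd.mono ((Ioo_subset_Icc_self).trans hsubI))
      have h1s : (0:ℝ) < 1 - s := by linarith
      have hval : ψ s = (s - 1) * deriv ψ c := by
        rw [hcd, hψ1]; field_simp; ring
      have h2 : deriv ψ s < deriv ψ c :=
        hmono s 1 hs (fun h => lt_irrefl 1 h.2)
          (left_mem_Icc.2 hlt.le) ⟨hc.1.le, hc.2.le⟩ hc.1
      nlinarith
    · rw [heq, hψ1]; simp
    · have hsubI : Icc 1 s ⊆ Ioi 0 := fun x hx => lt_of_lt_of_le one_pos hx.1
      obtain ⟨c, hc, hcd⟩ := exists_deriv_eq_slope ψ hgt (hψc.mono hsubI)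
        (hψd.mono ((Ioo_subset_Icc_self).trans hsubI))
      have h1s : (0:ℝ) < s - 1 := by linarith
      have hval : ψ s = (s - 1) * deriv ψ c := by
        rw [hcd, hψ1]; field_simp; ring
      have h2 : deriv ψ c < deriv ψ s :=
        hmono 1 s one_pos (fun h => lt_irrefl 1 h.1)
          ⟨hc.1.le, hc.2.le⟩ (right_mem_Icc.2 hgt.le) hc.2
      nlinarith
  -- Step 2 : the compact-interval lower bound on deriv g
  set a : ℝ := min ε 1 with ha_def
  have ha : 0 < a := lt_min hε one_pos
  have ha1 : a ≤ 1 := min_le_right _ _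
  have haε : a ≤ ε := min_le_left _ _
  have hKsub : Icc a 2 ⊆ Ioi 0 := fun x hx => lt_of_lt_of_le ha hx.1
  obtain ⟨m0, hm0K, hm0min⟩ := (isCompact_Icc).exists_isMinOn
    ⟨1, ha1, by norm_num⟩ (hg'c.mono hKsub)
  set m : ℝ := deriv g m0 with hm_def
  have hm : 0 < m := hg' m0 (hKsub hm0K)
  have hmlb : ∀ x ∈ Icc a 2, m ≤ deriv g x := fun x hx => hm0min hx
  have hg2 : 0 < g 2 := by
    have := hgm (show (1:ℝ) ∈ Ioi 0 by norm_num) (show (2:ℝ) ∈ Ioi 0 by norm_num)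
      (by norm_num)
    rwa [hg1] at this
  set Cε : ℝ := max (1 / (m * a)) (1 / g 2) with hC_def
  have hma : 0 < m * a := mul_pos hm ha
  have hCpos : 0 < Cε := lt_max_of_lt_left (by positivity)
  have hC1 : 1 / (m * a) ≤ Cε := le_max_left _ _
  have hC2 : 1 / g 2 ≤ Cε := le_max_right _ _
  refine ⟨Cε, hCpos, fun s hsε => ?_⟩
  have hs0 : 0 < s := lt_of_lt_of_le hε hsε
  refine (claim1 s hs0).trans ?_
  rcases lt_trichotomy s 1 with hlt | heq | hgt
  · -- s < 1
    have hψ's : deriv ψ s < 0 := hψ'neg s hs0 hlt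
    have hsubI : Icc s 1 ⊆ Ioi 0 := fun x hx => lt_of_lt_of_le hs0 hx.1
    obtain ⟨c, hc, hcd⟩ := exists_deriv_eq_slope g hlt (hgc.mono hsubI)
      (hgd.mono ((Ioo_subset_Icc_self).trans hsubI))
    have h1s : (0:ℝ) < 1 - s := by linarith
    have hgs : g 1 - g s = deriv g c * (1 - s) := by
      rw [hcd]; field_simp
    have hcK : c ∈ Icc a 2 := ⟨by linarith [hc.1, haε.trans hsε], by linarith [hc.2]⟩
    have hmc : m ≤ deriv g c := hmlb c hcK
    -- -g s ≥ m * (1 - s)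
    have hglb : m * (1 - s) ≤ -g s := by nlinarith [hg1]
    have hsa : a ≤ s := haε.trans hsε
    have e1 : 1 - s ≤ Cε * (s * (-g s)) := by
      have e0 : m * a * (1 - s) ≤ s * (-g s) := by
        nlinarith [mul_le_mul_of_nonneg_left hglb hs0.le,
          mul_le_mul_of_nonneg_right hsa (by nlinarith : (0:ℝ) ≤ m * (1 - s))]
      calc 1 - s = 1 / (m * a) * (m * a * (1 - s)) := by field_simp
        _ ≤ 1 / (m * a) * (s * (-g s)) := by
            apply mul_le_mul_of_nonneg_left e0 (by positivity)
        _ ≤ Cε * (s * (-g s)) := by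
            apply mul_le_mul_of_nonneg_right hC1
            nlinarith
    have := mul_le_mul_of_nonneg_right e1 (neg_nonneg.2 hψ's.le)
    nlinarith
  · subst heq
    rw [hψ'1]
    simp
  · -- 1 < s
    have hψ's : 0 < deriv ψ s := hψ'pos s hgt
    have hgsp : 0 < g s := by
      have := hgm (show (1:ℝ) ∈ Ioi 0 by norm_num) (mem_Ioi.2 hs0) hgt
      rwa [hg1] at this
    have e1 : s - 1 ≤ Cε * (s * g s) := by
      rcases le_or_gt s 2 with h2 | h2
      · have hsubI : Icc 1 s ⊆ Ioi 0 := fun x hx => lt_of_lt_of_le one_pos hx.1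
        obtain ⟨c, hc, hcd⟩ := exists_deriv_eq_slope g hgt (hgc.mono hsubI)
          (hgd.mono ((Ioo_subset_Icc_self).trans hsubI))
        have h1s : (0:ℝ) < s - 1 := by linarith
        have hgs : g s - g 1 = deriv g c * (s - 1) := by
          rw [hcd]; field_simp
        have hcK : c ∈ Icc a 2 := ⟨by linarith [hc.1], by linarith [hc.2]⟩
        have hmc : m ≤ deriv g c := hmlb c hcK
        have hglb : m * (s - 1) ≤ g s := by nlinarith [hg1]
        have e0 : m * a * (s - 1) ≤ s * g s := by
          nlinarith [mul_le_mul_of_nonneg_left hglb hs0.le,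
            mul_le_mul_of_nonneg_right (ha1.trans hgt.le) (by nlinarith : (0:ℝ) ≤ m * (s - 1))]
        calc s - 1 = 1 / (m * a) * (m * a * (s - 1)) := by field_simp
          _ ≤ 1 / (m * a) * (s * g s) := by
              apply mul_le_mul_of_nonneg_left e0 (by positivity)
          _ ≤ Cε * (s * g s) := by
              apply mul_le_mul_of_nonneg_right hC1
              nlinarith
      · have hg2s : g 2 ≤ g s := (hgm (show (2:ℝ) ∈ Ioi 0 by norm_num)
          (mem_Ioi.2 hs0) h2).le
        have e0 : g 2 * (s - 1) ≤ s * g s := by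
          nlinarith [mul_le_mul_of_nonneg_left hg2s hs0.le]
        calc s - 1 = 1 / g 2 * (g 2 * (s - 1)) := by field_simp
          _ ≤ 1 / g 2 * (s * g s) := by
              apply mul_le_mul_of_nonneg_left e0 (by positivity)
          _ ≤ Cε * (s * g s) := by
              apply mul_le_mul_of_nonneg_right hC2
              nlinarith
    have := mul_le_mul_of_nonneg_right e1 hψ's.le
    nlinarith
end
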